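/- Let N ≥ 2, d ≥ 1, and let F : ℂ^N → M_{2×N}(ℂ) be given by the first row (x₁^d, x₂^d, …, x_N^d) and the second row its cyclic shift (x_N^d, x₁^d, …, x_{N−1}^d). Then F defines an EIDS: for every x ∈ ℂ^N with x ≠ 0, im(DF_x) + {B ∈ M_{2×N}(ℂ) : B(ker F(x)) ⊆ im F(x)} = M_{2×N}(ℂ). -/

import Mathlib

/-- The tangent space at `A` to the stratum of `m×n` matrices of the same rank as `A`:
matrices `B` with `B(ker A) ⊆ im A`. -/
def rankStratumTangent {m n : ℕ} (A : Matrix (Fin m) (Fin n) ℂ) :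
    Set (Matrix (Fin m) (Fin n) ℂ) :=
  {B | ∀ u : Fin n → ℂ, A.mulVec u = 0 → ∃ z : Fin n → ℂ, B.mulVec u = A.mulVec z}

/-- `F` is transverse at `x` to the rank stratum through `F(x)`:
`im(DF_x) + T_{F(x)} = M_{m×n}(ℂ)`. -/
def TransverseAt {N m n : ℕ} (F : (Fin N → ℂ) → Matrix (Fin m) (Fin n) ℂ)
    (x : Fin N → ℂ) : Prop :=
  ∀ C : Matrix (Fin m) (Fin n) ℂ, ∃ (v : Fin N → ℂ) (B : Matrix (Fin m) (Fin n) ℂ),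
    B ∈ rankStratumTangent (F x) ∧
    C = Matrix.of (fderiv ℂ (fun y i j => F y i j) x v) + B

lemma sub_one_val' {N : ℕ} [NeZero N] (j : Fin N) :
    (j - 1).val = if j.val = 0 then N - 1 else j.val - 1 := by
  obtain ⟨n, rfl⟩ : ∃ n, N = n + 1 := ⟨N - 1, (Nat.succ_pred_eq_of_pos (NeZero.pos N)).symm⟩
  rw [Fin.coe_sub_one]
  congr 1
  simp only [Fin.ext_iff, Fin.val_zero]

open ContinuousLinearMap in
lemma entry_deriv' {N : ℕ} (d : ℕ) (x : Fin N → ℂ) (j : Fin N) :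
    HasFDerivAt (fun y : Fin N → ℂ => y j ^ d)
      ((((d : ℂ) * x j ^ (d - 1)) • (proj j : (Fin N → ℂ) →L[ℂ] ℂ))) x :=
  (hasDerivAt_pow d (x j)).comp_hasFDerivAt x (hasFDerivAt_apply j x)

open ContinuousLinearMap in
lemma G_deriv' {N : ℕ} [NeZero N] (d : ℕ) (x v : Fin N → ℂ) :
    fderiv ℂ
      (fun y : Fin N → ℂ => fun i j =>
        (Matrix.of ![fun j : Fin N => y j ^ d, fun j : Fin N => y (j - 1) ^ d] :
          Matrix (Fin 2) (Fin N) ℂ) i j) x v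
      = ![fun j : Fin N => (d : ℂ) * x j ^ (d - 1) * v j,
          fun j : Fin N => (d : ℂ) * x (j - 1) ^ (d - 1) * v (j - 1)] := by
  have hD : HasFDerivAt
      (fun y : Fin N → ℂ => fun i j =>
        (Matrix.of ![fun j : Fin N => y j ^ d, fun j : Fin N => y (j - 1) ^ d] :
          Matrix (Fin 2) (Fin N) ℂ) i j)
      (pi (fun i : Fin 2 => pi (fun j : Fin N =>
        ![(((d : ℂ) * x j ^ (d - 1)) • (proj j : (Fin N → ℂ) →L[ℂ] ℂ)),
          (((d : ℂ) * x (j - 1) ^ (d - 1)) • (proj (j - 1) : (Fin N → ℂ) →L[ℂ] ℂ))] i))) x := by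
    apply hasFDerivAt_pi.2
    intro i
    apply hasFDerivAt_pi.2
    intro j
    fin_cases i
    · simpa using entry_deriv' d x j
    · simpa using entry_deriv' d x (j - 1)
  rw [hD.fderiv]
  ext i j
  fin_cases i <;> simp

lemma cyclic_solve {N : ℕ} [NeZero N] (l : ℂ) (hl : l ≠ 0) (hlN : l ^ N = 1)
    (a : Fin N → ℂ) (ha0 : a 0 ≠ 0) (ha : ∀ j : Fin N, l ^ (j.val) * a j = a 0)
    (w : Fin N → ℂ) :
    ∃ (s : Fin N → ℂ) (c : ℂ), ∀ j : Fin N, l * s j - s (j - 1) = w j - c * a j := by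
  have hN0 : (N : ℂ) ≠ 0 := Nat.cast_ne_zero.2 (NeZero.ne N)
  set c : ℂ := (∑ k : Fin N, l ^ (k.val) * w k) / (N * a 0) with hc
  set g : Fin N → ℂ := fun k => w k - c * a k with hg
  have hsum : ∑ k : Fin N, l ^ (k.val) * g k = 0 := by
    have h2 : ∑ k : Fin N, l ^ (k.val) * (c * a k) = c * (N * a 0) := by
      have he : ∀ k : Fin N, l ^ (k.val) * (c * a k) = c * a 0 := fun k => by
        rw [mul_left_comm, ha k]
      rw [Finset.sum_congr rfl (fun k _ => he k), Finset.sum_const, Finset.card_univ,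
        Fintype.card_fin, nsmul_eq_mul]
      ring
    have h3 : c * (N * a 0) = ∑ k : Fin N, l ^ (k.val) * w k := by
      rw [hc, div_mul_cancel₀]
      exact mul_ne_zero hN0 ha0
    simp only [hg, mul_sub]
    rw [Finset.sum_sub_distrib, h2, h3, sub_self]
  set gn : ℕ → ℂ := fun k => l ^ k * g ⟨k % N, Nat.mod_lt k (NeZero.pos N)⟩ with hgn
  have hgn' : ∀ j : Fin N, gn j.val = l ^ (j.val) * g j := by
    intro j
    simp only [hgn]
    congr 2
    exact Fin.ext (Nat.mod_eq_of_lt j.isLt)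
  have hPN : ∑ k ∈ Finset.range N, gn k = 0 := by
    rw [← Fin.sum_univ_eq_sum_range gn N, ← hsum]
    exact Finset.sum_congr rfl fun k _ => hgn' k
  refine ⟨fun j => (∑ k ∈ Finset.range (j.val + 1), gn k) / l ^ (j.val + 1), c, ?_⟩
  intro j
  show l * ((∑ k ∈ Finset.range (j.val + 1), gn k) / l ^ (j.val + 1))
      - (∑ k ∈ Finset.range ((j - 1).val + 1), gn k) / l ^ ((j - 1).val + 1)
      = w j - c * a j
  have hgoal : ∀ X : ℂ, X = g j → X = w j - c * a j := fun X h => h.trans rfl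
  rcases Nat.eq_zero_or_pos j.val with hj0 | hjpos
  · have hsub : (j - 1).val = N - 1 := by rw [sub_one_val', if_pos hj0]
    have hN1 : N - 1 + 1 = N := Nat.succ_pred_eq_of_pos (NeZero.pos N)
    rw [hsub, hN1, hlN, hPN, hj0]
    apply hgoal
    rw [Finset.range_one, Finset.sum_singleton]
    have h0 : gn 0 = g j := by
      simp only [hgn, pow_zero, one_mul]
      congr 1
      exact Fin.ext (by simp [hj0])
    rw [h0]
    field_simp
    ring
  · obtain ⟨t, ht⟩ : ∃ t, j.val = t + 1 := ⟨j.val - 1, (Nat.succ_pred_eq_of_pos hjpos).symm⟩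
    have hsub : (j - 1).val = t := by rw [sub_one_val', if_neg (by omega), ht]; omega
    have hPt : ∑ k ∈ Finset.range (t + 1 + 1), gn k
        = (∑ k ∈ Finset.range (t + 1), gn k) + l ^ (t + 1) * g j := by
      rw [Finset.sum_range_succ]
      congr 1
      rw [← ht]
      exact hgn' j
    apply hgoal
    rw [hsub, ht, hPt]
    have hlt : l ^ (t + 1) ≠ 0 := pow_ne_zero _ hl
    have hlt2 : l ^ (t + 1 + 1) ≠ 0 := pow_ne_zero _ hl
    field_simp
    ring

open Fin.NatCast in
lemma all_nonzero {N : ℕ} [NeZero N] {d : ℕ} (hd : 1 ≤ d) (x : Fin N → ℂ) (hx : x ≠ 0)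
    (hrel : ∀ p q : Fin N, x p ^ d * x (q - 1) ^ d = x q ^ d * x (p - 1) ^ d) (j : Fin N) :
    x j ≠ 0 := by
  intro hj
  have step : ∀ t : Fin N, x t = 0 → x (t - 1) = 0 := by
    intro t ht
    by_contra h1
    apply hx
    funext p
    have h2 := hrel p t
    rw [ht, zero_pow (by omega : d ≠ 0), zero_mul] at h2
    have h3 : x p ^ d = 0 := by
      rcases mul_eq_zero.1 h2 with h | h
      · exact h
      · exact absurd h (pow_ne_zero _ h1)
    exact pow_eq_zero_iff (by omega : d ≠ 0) |>.1 h3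
  have hall : ∀ k : ℕ, x (j - (k : Fin N)) = 0 := by
    intro k
    induction k with
    | zero => simpa using hj
    | succ n ih =>
      have h4 : j - ((n + 1 : ℕ) : Fin N) = (j - (n : Fin N)) - 1 := by
        push_cast
        rw [sub_sub]
      rw [h4]
      exact step _ ih
  apply hx
  funext p
  have h5 := hall ((j - p).val)
  rwa [Fin.cast_val_eq_self, sub_sub_cancel] at h5


/-- For `N ≥ 2` and `d ≥ 1`, the `2×N` matrix family whose first row is
`(x₁^d, …, x_N^d)` and whose second row is its cyclic shift `(x_N^d, x₁^d, …, x_{N−1}^d)`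
defines an EIDS: it is transverse to the rank stratum through its value at every `x ≠ 0`. -/
theorem cyclic_shift_EIDS
    (N : ℕ) [NeZero N] (hN : 2 ≤ N) (d : ℕ) (hd : 1 ≤ d)
    (x : Fin N → ℂ) (hx : x ≠ 0) :
    TransverseAt
      (fun x : Fin N → ℂ =>
        (Matrix.of ![fun j : Fin N => x j ^ d, fun j : Fin N => x (j - 1) ^ d] :
          Matrix (Fin 2) (Fin N) ℂ)) x := by
  intro C
  by_cases hrk : ∃ p q : Fin N, x p ^ d * x (q - 1) ^ d ≠ x q ^ d * x (p - 1) ^ d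
  · -- rank 2 case: the tangent space is everything
    obtain ⟨p, q, hpq⟩ := hrk
    have hD : x p ^ d * x (q - 1) ^ d - x q ^ d * x (p - 1) ^ d ≠ 0 := sub_ne_zero.2 hpq
    refine ⟨0, C, ?_, ?_⟩
    · intro u _
      set a := C.mulVec u 0 with ha
      set b := C.mulVec u 1 with hb
      refine ⟨Pi.single p ((a * x (q - 1) ^ d - b * x q ^ d)
          / (x p ^ d * x (q - 1) ^ d - x q ^ d * x (p - 1) ^ d))
        + Pi.single q ((b * x p ^ d - a * x (p - 1) ^ d)
          / (x p ^ d * x (q - 1) ^ d - x q ^ d * x (p - 1) ^ d)), ?_⟩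
      rw [Matrix.mulVec_add, Matrix.mulVec_single, Matrix.mulVec_single]
      funext i
      fin_cases i
      · show a = _
        simp only [Pi.add_apply, Matrix.of_apply, Matrix.cons_val', Matrix.cons_val_zero,
          Matrix.empty_val', Matrix.cons_val_fin_one, Pi.smul_apply, Matrix.col_apply,
          MulOpposite.smul_eq_mul_unop, MulOpposite.unop_op, Fin.zero_eta]
        field_simp
        ring
      · show b = _
        simp only [Pi.add_apply, Matrix.of_apply, Matrix.cons_val', Matrix.cons_val_one,
          Matrix.head_cons, Matrix.empty_val', Matrix.cons_val_fin_one, Pi.smul_apply,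
          Matrix.col_apply, MulOpposite.smul_eq_mul_unop, MulOpposite.unop_op, Fin.mk_one]
        field_simp
        have hZ : -(x (p - 1) ^ d * x q ^ d) + x (q - 1) ^ d * x p ^ d ≠ 0 := by
          intro h; apply hD; linear_combination h
        linear_combination (-b) * mul_inv_cancel₀ hZ
    · have h0 : fderiv ℂ
          (fun y : Fin N → ℂ => fun i j =>
            (Matrix.of ![fun j : Fin N => y j ^ d, fun j : Fin N => y (j - 1) ^ d] :
              Matrix (Fin 2) (Fin N) ℂ) i j) x 0
          = 0 := map_zero _
      show C = Matrix.of _ + C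
      rw [h0]
      ext i j
      simp
  · push_neg at hrk
    have hnz : ∀ j, x j ≠ 0 := all_nonzero hd x hx hrk
    have hx0d : x 0 ^ d ≠ 0 := pow_ne_zero _ (hnz 0)
    set l : ℂ := x ((0 : Fin N) - 1) ^ d / x 0 ^ d with hldef
    have hlam : ∀ j : Fin N, x (j - 1) ^ d = l * x j ^ d := by
      intro j
      rw [hldef, div_mul_eq_mul_div, eq_div_iff hx0d]
      linear_combination -hrk j 0
    have hl : l ≠ 0 := div_ne_zero (pow_ne_zero _ (hnz _)) hx0d
    have hpow : ∀ (k : ℕ) (hk : k < N), l ^ k * x ⟨k, hk⟩ ^ d = x 0 ^ d := by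
      intro k
      induction k with
      | zero =>
        intro hk
        have h00 : (⟨0, hk⟩ : Fin N) = 0 := rfl
        rw [h00, pow_zero, one_mul]
      | succ n ih =>
        intro hk
        have hn : n < N := Nat.lt_of_succ_lt hk
        have h1 : (⟨n + 1, hk⟩ : Fin N) - 1 = ⟨n, hn⟩ := by
          apply Fin.ext
          rw [sub_one_val']
          simp
        calc l ^ (n + 1) * x ⟨n + 1, hk⟩ ^ d = l ^ n * (l * x ⟨n + 1, hk⟩ ^ d) := by ring
          _ = l ^ n * x ((⟨n + 1, hk⟩ : Fin N) - 1) ^ d := by rw [← hlam ⟨n + 1, hk⟩]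
          _ = l ^ n * x ⟨n, hn⟩ ^ d := by rw [h1]
          _ = x 0 ^ d := ih hn
    have hlN : l ^ N = 1 := by
      obtain ⟨n, hNn⟩ : ∃ n, N = n + 1 := ⟨N - 1, (Nat.succ_pred_eq_of_pos (NeZero.pos N)).symm⟩
      have hn : n < N := by omega
      have h2 : (0 : Fin N) - 1 = ⟨n, hn⟩ := by
        apply Fin.ext
        rw [sub_one_val']
        simp [hNn]
      have hpowN : l ^ N = l ^ n * l := by rw [hNn, pow_succ]
      have key : l ^ N * x 0 ^ d = x 0 ^ d := by
        calc l ^ N * x 0 ^ d = l ^ n * (l * x 0 ^ d) := by rw [hpowN]; ring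
          _ = l ^ n * x ((0 : Fin N) - 1) ^ d := by rw [← hlam 0]
          _ = l ^ n * x ⟨n, hn⟩ ^ d := by rw [h2]
          _ = x 0 ^ d := hpow n hn
      have := mul_right_cancel₀ hx0d (key.trans (one_mul (x 0 ^ d)).symm)
      exact this
    obtain ⟨s, c, hkey⟩ := cyclic_solve l hl hlN (fun j => x j ^ d) hx0d
      (fun j => hpow j.val j.isLt) (fun j => l * C 0 j - C 1 j)
    have hd0 : (d : ℂ) ≠ 0 := Nat.cast_ne_zero.2 (by omega)
    set v : Fin N → ℂ := fun j => s j / ((d : ℂ) * x j ^ (d - 1)) with hvdef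
    have hv : ∀ j, (d : ℂ) * x j ^ (d - 1) * v j = s j := by
      intro j
      have hne : (d : ℂ) * x j ^ (d - 1) ≠ 0 := mul_ne_zero hd0 (pow_ne_zero _ (hnz j))
      rw [hvdef]
      field_simp
      exact mul_div_cancel_left₀ _ (pow_ne_zero _ (hnz j))
    refine ⟨v, C - Matrix.of ![fun j => s j, fun j => s (j - 1)], ?_, ?_⟩
    · intro u hu
      have hrow0 : ∑ j, x j ^ d * u j = 0 := by
        have h := congrFun hu 0
        simpa [Matrix.mulVec, dotProduct] using h
      set t0 := ∑ j, (C 0 j - s j) * u j with ht0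
      set t1 := ∑ j, (C 1 j - s (j - 1)) * u j with ht1
      have h1 : l * t0 - t1 = c * ∑ j, x j ^ d * u j := by
        rw [ht0, ht1, Finset.mul_sum, ← Finset.sum_sub_distrib, Finset.mul_sum]
        refine Finset.sum_congr rfl fun j _ => ?_
        linear_combination (-u j) * hkey j
      rw [hrow0, mul_zero] at h1
      refine ⟨Pi.single 0 (t0 / x 0 ^ d), ?_⟩
      rw [Matrix.mulVec_single]
      funext i
      fin_cases i
      · show ∑ j, (C 0 j - s j) * u j = x 0 ^ d * (t0 / x 0 ^ d)
        rw [← ht0]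
        field_simp
      · show ∑ j, (C 1 j - s (j - 1)) * u j = x ((0 : Fin N) - 1) ^ d * (t0 / x 0 ^ d)
        rw [← ht1, hlam 0]
        have ht1' : t1 = l * t0 := by linear_combination -h1
        rw [ht1']
        field_simp
    · rw [G_deriv']
      ext i j
      fin_cases i
      · show C 0 j = (d : ℂ) * x j ^ (d - 1) * v j + (C 0 j - s j)
        rw [hv j]
        ring
      · show C 1 j = (d : ℂ) * x (j - 1) ^ (d - 1) * v (j - 1) + (C 1 j - s (j - 1))
        rw [hv (j - 1)]
        ring
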